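/- For 0 < α ≤ 12 and n ≥ 2, the function p(x,y) = |x − y|/√(|x − y|² + α xₙ yₙ) on the upper half-space ℍⁿ = {x ∈ ℝⁿ : xₙ > 0} satisfies the triangle inequality p(x,y) ≤ p(x,z) + p(z,y) for all x, y, z ∈ ℍⁿ, and hence is a metric on ℍⁿ. For α > 12 it is not a metric. -/

import Mathlib

set_option maxHeartbeats 1000000

private lemma F_mono (β a S : ℝ) (hβ : 0 < β) (ha : 0 ≤ a) (haS : a ≤ S) :
    a / Real.sqrt (a^2+β) ≤ S / Real.sqrt (S^2+β) := by
  have hS : 0 ≤ S := ha.trans haS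
  have h1 : 0 < Real.sqrt (a^2+β) := Real.sqrt_pos.mpr (by positivity)
  have h2 : 0 < Real.sqrt (S^2+β) := Real.sqrt_pos.mpr (by positivity)
  rw [div_le_div_iff₀ h1 h2]
  have ha' : a * Real.sqrt (S^2+β) = Real.sqrt (a^2*(S^2+β)) := by
    rw [Real.sqrt_mul (sq_nonneg a), Real.sqrt_sq ha]
  have hS' : S * Real.sqrt (a^2+β) = Real.sqrt (S^2*(a^2+β)) := by
    rw [Real.sqrt_mul (sq_nonneg S), Real.sqrt_sq hS]
  rw [ha', hS']
  apply Real.sqrt_le_sqrt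
  nlinarith [mul_le_mul haS haS ha hS]

private lemma key_ineq (β b c u v B C : ℝ) (hβ : 0 < β) (hβ3 : β ≤ 3) (hb : 0 ≤ b) (hc : 0 ≤ c)
    (hu : 0 < u) (hv : 0 < v)
    (hu2 : u^2 = b^2+β) (hv2 : v^2 = c^2+β) (hB2 : B^2 = 1+b^2) (hC2 : C^2 = 1+c^2)
    (hcase : b*v+c*u < u*v) :
    (b*C+c*B)^2 * (u*v)^2 ≤ (b*v+c*u)^2 * ((b*C+c*B)^2 + β) := by
  have hD : 0 ≤ b*v+c*u := by positivity
  have hΔid : u^2*v^2 - (b*v+c*u)^2 = β^2 - b^2*c^2 - 2*b*c*(u*v) := by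
    linear_combination (v^2-c^2)*hu2 + β*hv2
  have hΔ : 0 ≤ β^2 - b^2*c^2 - 2*b*c*(u*v) := by
    have h2 : (b*v+c*u)^2 ≤ (u*v)^2 := pow_le_pow_left₀ hD hcase.le 2
    nlinarith [hΔid]
  have key1 : (u*v) * (b*C+c*B)^2 ≤ (b*v+c*u) * (b*u*C^2 + c*v*B^2) := by
    nlinarith [mul_nonneg (mul_nonneg hb hc) (sq_nonneg (v*B - u*C))]
  have bracket : 0 ≤ b*c*(u*v) + 2*(u*v)^2 + (1-β)*(β^2 - b^2*c^2 - 2*b*c*(u*v)) := by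
    rcases le_or_gt β 1 with h1 | h1
    · nlinarith [mul_nonneg (mul_nonneg hb hc) (mul_nonneg hu.le hv.le),
        mul_nonneg (by linarith : (0:ℝ) ≤ 1-β) hΔ]
    · have hΔle : β^2 - b^2*c^2 - 2*b*c*(u*v) ≤ u^2*v^2 := by
        nlinarith [hΔid, sq_nonneg (b*v+c*u)]
      nlinarith [mul_nonneg (mul_nonneg hb hc) (mul_nonneg hu.le hv.le),
        mul_nonneg (by linarith : (0:ℝ) ≤ 3-β) hΔ, hΔle]
  have key3 : β * (β*(u*v)*(b*v+c*u) - (b*u*C^2 + c*v*B^2) * (β^2 - b^2*c^2 - 2*b*c*(u*v)))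
      = ((b*v+c*u) * (b*c)) * (b*c*(u*v) + 2*(u*v)^2 + (1-β)*(β^2 - b^2*c^2 - 2*b*c*(u*v))) := by
    rw [hB2, hC2]
    linear_combination (c*β^2*v - 2*b*c^2*u*v^2 - 2*b^2*c*v^3 + 2*b^2*c*β*v + b^2*c^3*v) * hu2
      + (b*β^2*u - 2*b^2*c*β*v - b^3*c^2*u - 2*b^4*c*v) * hv2
  have key2 : (b*u*C^2 + c*v*B^2) * (β^2 - b^2*c^2 - 2*b*c*(u*v)) ≤ β*(u*v)*(b*v+c*u) := by
    have h : 0 ≤ ((b*v+c*u) * (b*c)) * (b*c*(u*v) + 2*(u*v)^2 + (1-β)*(β^2 - b^2*c^2 - 2*b*c*(u*v))) :=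
      mul_nonneg (mul_nonneg hD (mul_nonneg hb hc)) bracket
    rw [← key3] at h
    have h2 : 0 ≤ β*(u*v)*(b*v+c*u) - (b*u*C^2 + c*v*B^2) * (β^2 - b^2*c^2 - 2*b*c*(u*v)) :=
      nonneg_of_mul_nonneg_right h hβ
    linarith
  have h3 : (u*v)*((b*C+c*B)^2*(β^2-b^2*c^2-2*b*c*(u*v))) ≤ (u*v)*(β*(b*v+c*u)^2) := by
    calc (u*v)*((b*C+c*B)^2*(β^2-b^2*c^2-2*b*c*(u*v)))
        = (u*v)*(b*C+c*B)^2*(β^2-b^2*c^2-2*b*c*(u*v)) := by ring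
      _ ≤ (b*v+c*u)*(b*u*C^2 + c*v*B^2)*(β^2-b^2*c^2-2*b*c*(u*v)) :=
          mul_le_mul_of_nonneg_right key1 hΔ
      _ = (b*v+c*u)*((b*u*C^2 + c*v*B^2)*(β^2-b^2*c^2-2*b*c*(u*v))) := by ring
      _ ≤ (b*v+c*u)*(β*(u*v)*(b*v+c*u)) := mul_le_mul_of_nonneg_left key2 hD
      _ = (u*v)*(β*(b*v+c*u)^2) := by ring
  have h4 : (b*C+c*B)^2*(β^2-b^2*c^2-2*b*c*(u*v)) ≤ β*(b*v+c*u)^2 :=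
    le_of_mul_le_mul_left h3 (mul_pos hu hv)
  have h5 : (b*C+c*B)^2*(u^2*v^2-(b*v+c*u)^2) ≤ β*(b*v+c*u)^2 := by rw [hΔid]; exact h4
  nlinarith [h5]

private lemma sqrt_form (a s t α : ℝ) (hs : 0 < s) (ht : 0 < t) (hα : 0 < α) :
    a / Real.sqrt (a^2 + α*s*t)
      = (a/(2*Real.sqrt (s*t))) / Real.sqrt ((a/(2*Real.sqrt (s*t)))^2 + α/4) := by
  have hr : 0 < Real.sqrt (s*t) := Real.sqrt_pos.mpr (by positivity)
  have hr2 : (Real.sqrt (s*t))^2 = s*t := Real.sq_sqrt (by positivity)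
  have hsq : (2*Real.sqrt (s*t))^2 = 4*(s*t) := by rw [mul_pow, hr2]; norm_num
  have hX : 0 < Real.sqrt (a^2 + α*s*t) := Real.sqrt_pos.mpr (by positivity)
  have h1 : (a/(2*Real.sqrt (s*t)))^2 + α/4 = (a^2 + α*s*t)/((2*Real.sqrt (s*t))^2) := by
    rw [div_pow, hsq]
    have h4 : (4:ℝ)*(s*t) ≠ 0 := by positivity
    field_simp
  have h2 : Real.sqrt ((a^2 + α*s*t)/((2*Real.sqrt (s*t))^2))
      = Real.sqrt (a^2 + α*s*t)/(2*Real.sqrt (s*t)) := by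
    rw [Real.sqrt_div' _ (by positivity), Real.sqrt_sq (by positivity)]
  rw [h1, h2, div_div_div_cancel_right₀ (by positivity : (0:ℝ) < 2*Real.sqrt (s*t)).ne']

private lemma geom_to_scalar (a b c s t u0 : ℝ) (hs : 0 < s) (ht : 0 < t) (hu0 : 0 < u0)
    (ha : 0 ≤ a)
    (hpt : a * (2*u0) ≤ b * Real.sqrt (c^2+4*(t*u0)) + c * Real.sqrt (b^2+4*(s*u0))) :
    a/(2*Real.sqrt (s*t)) ≤
      (b/(2*Real.sqrt (s*u0)))*Real.sqrt (1+(c/(2*Real.sqrt (u0*t)))^2)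
      + (c/(2*Real.sqrt (u0*t)))*Real.sqrt (1+(b/(2*Real.sqrt (s*u0)))^2) := by
  have hr1 : 0 < Real.sqrt (s*u0) := Real.sqrt_pos.mpr (by positivity)
  have hr2 : 0 < Real.sqrt (u0*t) := Real.sqrt_pos.mpr (by positivity)
  have hr3 : 0 < Real.sqrt (s*t) := Real.sqrt_pos.mpr (by positivity)
  have hq1 : (Real.sqrt (s*u0))^2 = s*u0 := Real.sq_sqrt (by positivity)
  have hq2 : (Real.sqrt (u0*t))^2 = u0*t := Real.sq_sqrt (by positivity)
  have e1 : Real.sqrt (1+(c/(2*Real.sqrt (u0*t)))^2)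
      = Real.sqrt (c^2+4*(t*u0)) / (2*Real.sqrt (u0*t)) := by
    have h1 : 1+(c/(2*Real.sqrt (u0*t)))^2 = (c^2+4*(t*u0))/((2*Real.sqrt (u0*t))^2) := by
      rw [div_pow, show (2*Real.sqrt (u0*t))^2 = 4*(u0*t) from by rw [mul_pow, hq2]; norm_num]
      field_simp; ring
    rw [h1, Real.sqrt_div' _ (by positivity), Real.sqrt_sq (by positivity)]
  have e2 : Real.sqrt (1+(b/(2*Real.sqrt (s*u0)))^2)
      = Real.sqrt (b^2+4*(s*u0)) / (2*Real.sqrt (s*u0)) := by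
    have h1 : 1+(b/(2*Real.sqrt (s*u0)))^2 = (b^2+4*(s*u0))/((2*Real.sqrt (s*u0))^2) := by
      rw [div_pow, show (2*Real.sqrt (s*u0))^2 = 4*(s*u0) from by rw [mul_pow, hq1]; norm_num]
      field_simp; ring
    rw [h1, Real.sqrt_div' _ (by positivity), Real.sqrt_sq (by positivity)]
  have e3 : Real.sqrt (s*u0) * Real.sqrt (u0*t) = u0 * Real.sqrt (s*t) := by
    rw [← Real.sqrt_mul (by positivity), show s*u0*(u0*t) = u0^2*(s*t) from by ring,
      Real.sqrt_mul (sq_nonneg u0), Real.sqrt_sq hu0.le]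
  rw [e1, e2, div_mul_div_comm, div_mul_div_comm,
    show (2*Real.sqrt (s*u0))*(2*Real.sqrt (u0*t)) = 4*(u0*Real.sqrt (s*t)) from by
      rw [show (2*Real.sqrt (s*u0))*(2*Real.sqrt (u0*t))
          = 4*(Real.sqrt (s*u0)*Real.sqrt (u0*t)) from by ring, e3],
    show (2*Real.sqrt (u0*t))*(2*Real.sqrt (s*u0)) = 4*(u0*Real.sqrt (s*t)) from by
      rw [show (2*Real.sqrt (u0*t))*(2*Real.sqrt (s*u0))
          = 4*(Real.sqrt (s*u0)*Real.sqrt (u0*t)) from by ring, e3],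
    ← add_div, div_le_div_iff₀ (by positivity) (by positivity)]
  calc a*(4*(u0*Real.sqrt (s*t))) = (a*(2*u0))*(2*Real.sqrt (s*t)) := by ring
    _ ≤ (b * Real.sqrt (c^2+4*(t*u0)) + c * Real.sqrt (b^2+4*(s*u0)))*(2*Real.sqrt (s*t)) :=
        mul_le_mul_of_nonneg_right hpt (by positivity)

private lemma scalar_tri (β b c : ℝ) (hβ : 0 < β) (hβ3 : β ≤ 3) (hb : 0 ≤ b) (hc : 0 ≤ c) :
    (b * Real.sqrt (1+c^2) + c * Real.sqrt (1+b^2)) /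
      Real.sqrt ((b * Real.sqrt (1+c^2) + c * Real.sqrt (1+b^2))^2 + β)
      ≤ b / Real.sqrt (b^2+β) + c / Real.sqrt (c^2+β) := by
  have hB2 : (Real.sqrt (1+b^2))^2 = 1+b^2 := Real.sq_sqrt (by positivity)
  have hC2 : (Real.sqrt (1+c^2))^2 = 1+c^2 := Real.sq_sqrt (by positivity)
  have hu2 : (Real.sqrt (b^2+β))^2 = b^2+β := Real.sq_sqrt (by positivity)
  have hv2 : (Real.sqrt (c^2+β))^2 = c^2+β := Real.sq_sqrt (by positivity)
  have hu : 0 < Real.sqrt (b^2+β) := Real.sqrt_pos.mpr (by positivity)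
  have hv : 0 < Real.sqrt (c^2+β) := Real.sqrt_pos.mpr (by positivity)
  have hB : 0 < Real.sqrt (1+b^2) := Real.sqrt_pos.mpr (by positivity)
  have hC : 0 < Real.sqrt (1+c^2) := Real.sqrt_pos.mpr (by positivity)
  set B := Real.sqrt (1+b^2)
  set C := Real.sqrt (1+c^2)
  set u := Real.sqrt (b^2+β)
  set v := Real.sqrt (c^2+β)
  set S := b*C + c*B with hSdef
  have hS : 0 ≤ S := add_nonneg (mul_nonneg hb hC.le) (mul_nonneg hc hB.le)
  have hSd : 0 < Real.sqrt (S^2+β) := Real.sqrt_pos.mpr (by positivity)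
  have hSlt : S < Real.sqrt (S^2+β) := by
    nth_rewrite 1 [← Real.sqrt_sq hS]
    exact Real.sqrt_lt_sqrt (sq_nonneg S) (by linarith)
  rcases le_or_gt (u*v) (b*v+c*u) with hcase | hcase
  · have hR : 1 ≤ b/u + c/v := by
      rw [div_add_div _ _ hu.ne' hv.ne', le_div_iff₀ (by positivity)]
      linarith
    have hlt : S / Real.sqrt (S^2+β) < 1 := (div_lt_one hSd).mpr hSlt
    linarith
  · have hk := key_ineq β b c u v B C hβ hβ3 hb hc hu hv hu2 hv2 hB2 hC2 hcase
    have hsq : S^2 ≤ ((b/u+c/v)*Real.sqrt (S^2+β))^2 := by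
      rw [mul_pow, Real.sq_sqrt (by positivity), div_add_div _ _ hu.ne' hv.ne', div_pow,
        div_mul_eq_mul_div, le_div_iff₀ (by positivity)]
      calc S^2 * (u*v)^2 ≤ (b*v+c*u)^2 * (S^2 + β) := hk
        _ = (b*v+u*c)^2 * (S^2+β) := by ring
    rw [div_le_iff₀ hSd]
    have hRS : 0 ≤ (b/u+c/v)*Real.sqrt (S^2+β) := by positivity
    calc S = Real.sqrt (S^2) := (Real.sqrt_sq hS).symm
      _ ≤ Real.sqrt (((b/u+c/v)*Real.sqrt (S^2+β))^2) := Real.sqrt_le_sqrt hsq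
      _ = (b/u+c/v)*Real.sqrt (S^2+β) := Real.sqrt_sq hRS

theorem ppf_alpha_halfspace (n : ℕ) (hn : 2 ≤ n) (α : ℝ) (hα : 0 < α)
    (last : Fin n) (hlast : (last : ℕ) = n - 1)
    (p : EuclideanSpace ℝ (Fin n) → EuclideanSpace ℝ (Fin n) → ℝ)
    (hp : ∀ x y, p x y = ‖x - y‖ / Real.sqrt (‖x - y‖^2 + α * x last * y last)) :
    (α ≤ 12 →
      (∀ x y z : EuclideanSpace ℝ (Fin n), 0 < x last → 0 < y last → 0 < z last →
        p x y ≤ p x z + p z y) ∧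
      (∀ x y : EuclideanSpace ℝ (Fin n), 0 < x last → 0 < y last → p x y = p y x) ∧
      (∀ x y : EuclideanSpace ℝ (Fin n), 0 < x last → 0 < y last → (p x y = 0 ↔ x = y))) ∧
    (12 < α → ∃ x y z : EuclideanSpace ℝ (Fin n),
      0 < x last ∧ 0 < y last ∧ 0 < z last ∧ p x y > p x z + p z y) := by
  constructor
  · intro hα12
    refine ⟨?_, ?_, ?_⟩
    · -- triangle inequality
      intro x y z hx hy hz
      have hβ : (0:ℝ) < α/4 := by linarith
      have hβ3 : α/4 ≤ 3 := by linarith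
      -- mirror point
      set z' : EuclideanSpace ℝ (Fin n) := z - EuclideanSpace.single last (2 * z last)
        with hz'def
      have hsub : ∀ w : EuclideanSpace ℝ (Fin n), (w - z) last = w last - z last := by
        intro w; rfl
      have hnorm2 : ∀ w : EuclideanSpace ℝ (Fin n),
          ‖w - z'‖^2 = ‖w - z‖^2 + 4*(w last)*(z last) := by
        intro w
        have h1 : w - z' = (w - z) + EuclideanSpace.single last (2 * z last) := by
          rw [hz'def]; abel
        rw [h1, norm_add_sq_real, EuclideanSpace.inner_single_right,
          EuclideanSpace.norm_single, hsub]
        simp only [RCLike.star_def, conj_trivial, Real.norm_eq_abs]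
        rw [sq_abs]
        ring
      have hzz' : dist z z' = 2 * z last := by
        rw [dist_eq_norm, hz'def, sub_sub_cancel, EuclideanSpace.norm_single,
          Real.norm_eq_abs, abs_of_pos (by linarith)]
      have hdist : ∀ w : EuclideanSpace ℝ (Fin n),
          dist w z' = Real.sqrt (‖w - z‖^2 + 4*(w last)*(z last)) := by
        intro w
        rw [dist_eq_norm, ← hnorm2 w, Real.sqrt_sq (norm_nonneg _)]
      have ptol := EuclideanGeometry.mul_dist_le_mul_dist_add_mul_dist x z y z'
      rw [hzz', hdist, hdist, dist_eq_norm, dist_eq_norm, dist_eq_norm] at ptol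
      -- ptol : ‖x-y‖ * (2*z last) ≤ ‖x-z‖ * √(‖y-z‖²+4 y_n z_n) + ‖z-y‖ * √(‖x-z‖²+4 x_n z_n)
      have hpt : ‖x-y‖ * (2*(z last)) ≤
          ‖x-z‖ * Real.sqrt (‖z-y‖^2+4*(y last*z last))
          + ‖z-y‖ * Real.sqrt (‖x-z‖^2+4*(x last*z last)) := by
        have e1 : ‖y-z‖ = ‖z-y‖ := norm_sub_rev _ _
        calc ‖x-y‖ * (2*(z last)) ≤
            ‖x-z‖ * Real.sqrt (‖y-z‖^2+4*(y last)*(z last))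
            + ‖z-y‖ * Real.sqrt (‖x-z‖^2+4*(x last)*(z last)) := ptol
          _ = ‖x-z‖ * Real.sqrt (‖z-y‖^2+4*(y last*z last))
            + ‖z-y‖ * Real.sqrt (‖x-z‖^2+4*(x last*z last)) := by
              rw [e1]; ring_nf
      have hma := geom_to_scalar (‖x-y‖) (‖x-z‖) (‖z-y‖) (x last) (y last) (z last)
        hx hy hz (norm_nonneg _) hpt
      have htri := scalar_tri (α/4) (‖x-z‖/(2*Real.sqrt (x last*z last)))
        (‖z-y‖/(2*Real.sqrt (z last*y last))) hβ hβ3 (by positivity) (by positivity)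
      have hmono := F_mono (α/4) (‖x-y‖/(2*Real.sqrt (x last*y last)))
        ((‖x-z‖/(2*Real.sqrt (x last*z last)))*Real.sqrt (1+(‖z-y‖/(2*Real.sqrt (z last*y last)))^2)
          + (‖z-y‖/(2*Real.sqrt (z last*y last)))*Real.sqrt (1+(‖x-z‖/(2*Real.sqrt (x last*z last)))^2))
        hβ (by positivity) hma
      rw [hp x y, hp x z, hp z y,
        sqrt_form (‖x-y‖) (x last) (y last) α hx hy hα,
        sqrt_form (‖x-z‖) (x last) (z last) α hx hz hα,
        sqrt_form (‖z-y‖) (z last) (y last) α hz hy hα]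
      exact le_trans hmono htri
    · -- symmetry
      intro x y hx hy
      rw [hp x y, hp y x, norm_sub_rev]
      ring_nf
    · -- identity of indiscernibles
      intro x y hx hy
      rw [hp x y]
      have hd : 0 < Real.sqrt (‖x - y‖^2 + α * x last * y last) := by
        apply Real.sqrt_pos.mpr
        have : 0 < α * x last * y last := by positivity
        nlinarith [sq_nonneg ‖x - y‖]
      constructor
      · intro h
        have := (div_eq_zero_iff.mp h).resolve_right hd.ne'
        rwa [norm_sub_eq_zero_iff] at this
      · intro h; subst h; simp
  · -- counterexample for α > 12
    intro h12
    set t0 : ℝ := (α-9)/3 with ht0def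
    have ht0 : 1 < t0 := by rw [ht0def]; linarith
    have hkey : 3*(t0+1)^2 < α*t0 := by rw [ht0def]; nlinarith
    refine ⟨EuclideanSpace.single last 1, EuclideanSpace.single last (t0^2),
      EuclideanSpace.single last t0, ?_, ?_, ?_, ?_⟩
    · simp
    · simp; nlinarith
    · simp; linarith
    · have hc : ∀ a b : ℝ, ‖(EuclideanSpace.single last a : EuclideanSpace ℝ (Fin n))
          - EuclideanSpace.single last b‖ = |a - b| := by
        intro a b
        rw [← dist_eq_norm, EuclideanSpace.dist_single_same, Real.dist_eq]
      rw [hp, hp, hp, hc, hc, hc]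
      simp only [EuclideanSpace.single_apply, eq_self_iff_true, if_true]
      have h1 : |1 - t0^2| = t0^2 - 1 := by rw [abs_of_nonpos (by nlinarith)]; ring
      have h2 : |1 - t0| = t0 - 1 := by rw [abs_of_nonpos (by nlinarith)]; ring
      have h3 : |t0 - t0^2| = t0^2 - t0 := by rw [abs_of_nonpos (by nlinarith)]; ring
      rw [h1, h2, h3]
      have ht0p : (0:ℝ) < t0 := by linarith
      have hzy : (t0^2-t0) / Real.sqrt ((t0^2-t0)^2 + α * t0 * t0^2)
          = (t0-1) / Real.sqrt ((t0-1)^2 + α * 1 * t0) := by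
        have e1 : (t0^2-t0)^2 + α * t0 * t0^2 = t0^2 * ((t0-1)^2 + α * 1 * t0) := by ring
        rw [e1, Real.sqrt_mul (sq_nonneg t0), Real.sqrt_sq ht0p.le]
        rw [show t0^2 - t0 = t0 * (t0-1) from by ring, mul_div_mul_left _ _ ht0p.ne']
      rw [hzy]
      have hA : 0 < Real.sqrt ((t0^2-1)^2 + α * 1 * t0^2) := Real.sqrt_pos.mpr (by positivity)
      have hB : 0 < Real.sqrt ((t0-1)^2 + α * 1 * t0) := Real.sqrt_pos.mpr (by positivity)
      have hA2 : (Real.sqrt ((t0^2-1)^2 + α * 1 * t0^2))^2 = (t0^2-1)^2 + α * 1 * t0^2 :=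
        Real.sq_sqrt (by positivity)
      have hB2 : (Real.sqrt ((t0-1)^2 + α * 1 * t0))^2 = (t0-1)^2 + α * 1 * t0 :=
        Real.sq_sqrt (by positivity)
      have hgoal : (t0-1)/Real.sqrt ((t0-1)^2 + α * 1 * t0)
          + (t0-1)/Real.sqrt ((t0-1)^2 + α * 1 * t0)
          < (t0^2-1)/Real.sqrt ((t0^2-1)^2 + α * 1 * t0^2) := by
        rw [← add_div, div_lt_div_iff₀ hB hA]
        have hsq : ((t0-1+(t0-1)) * Real.sqrt ((t0^2-1)^2 + α * 1 * t0^2))^2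
            < ((t0^2-1) * Real.sqrt ((t0-1)^2 + α * 1 * t0))^2 := by
          rw [mul_pow, mul_pow, hA2, hB2]
          nlinarith [mul_pos (pow_pos (show (0:ℝ) < t0-1 by linarith) 4)
            (show (0:ℝ) < α*t0 - 3*(t0+1)^2 by linarith)]
        have hnn : 0 ≤ (t0^2-1) * Real.sqrt ((t0-1)^2 + α * 1 * t0) := by
          apply mul_nonneg (by nlinarith) hB.le
        exact lt_of_pow_lt_pow_left₀ 2 hnn hsq
      linarith [hgoal]
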